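/- Let (p_n)_{n≥1} and (u_n)_{n≥1} be summable sequences of nonnegative reals related by the renewal equation u_n = p_n + ∑_{k=1}^{n-1} p_k u_{n-k} for all n ≥ 1. Then the generating functions u(s) = ∑_{n≥1} u_n s^n and p(s) = ∑_{n≥1} p_n s^n satisfy 1 + u(s) = 1/(1 - p(s)) for all complex s with |s| ≤ 1 (in particular p(s) ≠ 1 there). -/

import Mathlib

/-- if summable nonnegative sequences `(p_n)_{n≥1}` and
`(u_n)_{n≥1}` satisfy the renewal equation
`u_n = p_n + ∑_{k=1}^{n-1} p_k u_{n-k}`, then their generating functions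
satisfy `1 + u(s) = 1/(1 - p(s))` (in particular `p(s) ≠ 1`) on `|s| ≤ 1`. -/
theorem stmt3 (p u : ℕ → ℝ)
    (hp0 : p 0 = 0) (hu0 : u 0 = 0)
    (hpnn : ∀ n, 0 ≤ p n) (hunn : ∀ n, 0 ≤ u n)
    (hpsum : Summable p) (husum : Summable u)
    (hple : (∑' n, p n) ≤ 1)
    (hren : ∀ n : ℕ, 1 ≤ n →
      u n = p n + ∑ k ∈ Finset.Ico 1 n, p k * u (n - k)) :
    ∀ s : ℂ, ‖s‖ ≤ 1 →
      (∑' n : ℕ, (p n : ℂ) * s ^ n) ≠ 1 ∧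
      1 + (∑' n : ℕ, (u n : ℂ) * s ^ n) =
        1 / (1 - ∑' n : ℕ, (p n : ℂ) * s ^ n) := by
  -- convolution form of the renewal equation
  have hconv : ∀ n : ℕ, ∑ k ∈ Finset.range (n + 1), p k * u (n - k) = u n - p n := by
    intro n
    rcases Nat.eq_zero_or_pos n with rfl | hn
    · simp [hp0, hu0]
    · have : Finset.range (n + 1) = insert 0 (insert n (Finset.Ico 1 n)) := by
        ext k
        simp only [Finset.mem_range, Finset.mem_insert, Finset.mem_Ico]
        omega
      rw [this, Finset.sum_insert, Finset.sum_insert]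
      · rw [hp0, Nat.sub_self, hu0]
        have := hren n hn
        ring_nf
        linarith [this]
      · simp only [Finset.mem_Ico]; omega
      · simp only [Finset.mem_insert, Finset.mem_Ico]; omega
    -- real Cauchy product at s = 1 to get ∑ p < 1
  set A := ∑' n, p n with hA
  set B := ∑' n, u n with hB
  have hAnn : 0 ≤ A := tsum_nonneg hpnn
  have hBnn : 0 ≤ B := tsum_nonneg hunn
  have hAB : A * B = B - A := by
    have h1 : A * B = ∑' n, ∑ k ∈ Finset.range (n + 1), p k * u (n - k) := by
      apply tsum_mul_tsum_eq_tsum_sum_range_of_summable_norm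
      · simpa [Real.norm_eq_abs, abs_of_nonneg (hpnn _)] using hpsum
      · simpa [Real.norm_eq_abs, abs_of_nonneg (hunn _)] using husum
    rw [h1]
    simp_rw [hconv]
    rw [Summable.tsum_sub husum hpsum]
  have hAlt : A < 1 := by
    by_contra h
    push_neg at h
    have hA1 : A = 1 := le_antisymm hple h
    rw [hA1, one_mul] at hAB
    linarith
  intro s hs
  -- summability over ℂ
  have hpsC : Summable fun n => ‖(p n : ℂ) * s ^ n‖ := by
    apply Summable.of_nonneg_of_le (fun n => norm_nonneg _) (fun n => ?_) hpsum
    rw [norm_mul, norm_pow, Complex.norm_real, Real.norm_eq_abs, abs_of_nonneg (hpnn n)]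
    calc p n * ‖s‖ ^ n ≤ p n * 1 := by
            apply mul_le_mul_of_nonneg_left _ (hpnn n)
            exact pow_le_one₀ (norm_nonneg s) hs
      _ = p n := mul_one _
  have husC : Summable fun n => ‖(u n : ℂ) * s ^ n‖ := by
    apply Summable.of_nonneg_of_le (fun n => norm_nonneg _) (fun n => ?_) husum
    rw [norm_mul, norm_pow, Complex.norm_real, Real.norm_eq_abs, abs_of_nonneg (hunn n)]
    calc u n * ‖s‖ ^ n ≤ u n * 1 := by
            apply mul_le_mul_of_nonneg_left _ (hunn n)
            exact pow_le_one₀ (norm_nonneg s) hs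
      _ = u n := mul_one _
  set P := ∑' n : ℕ, (p n : ℂ) * s ^ n with hP
  set U := ∑' n : ℕ, (u n : ℂ) * s ^ n with hU
  have hPnorm : ‖P‖ < 1 := by
    calc ‖P‖ ≤ ∑' n, ‖(p n : ℂ) * s ^ n‖ := norm_tsum_le_tsum_norm hpsC
      _ ≤ ∑' n, p n := by
          apply Summable.tsum_le_tsum _ hpsC hpsum
          intro n
          rw [norm_mul, norm_pow, Complex.norm_real, Real.norm_eq_abs, abs_of_nonneg (hpnn n)]
          calc p n * ‖s‖ ^ n ≤ p n * 1 := by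
                apply mul_le_mul_of_nonneg_left _ (hpnn n)
                exact pow_le_one₀ (norm_nonneg s) hs
            _ = p n := mul_one _
      _ < 1 := hAlt
  have hne : (1 : ℂ) - P ≠ 0 := by
    intro h
    have : P = 1 := by linear_combination -h
    rw [this] at hPnorm
    simp at hPnorm
  -- complex Cauchy product
  have hPU : P * U = U - P := by
    have h1 : P * U = ∑' n : ℕ, ∑ k ∈ Finset.range (n + 1),
        ((p k : ℂ) * s ^ k) * ((u (n - k) : ℂ) * s ^ (n - k)) :=
      tsum_mul_tsum_eq_tsum_sum_range_of_summable_norm hpsC husC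
    have h2 : ∀ n : ℕ, ∑ k ∈ Finset.range (n + 1),
        ((p k : ℂ) * s ^ k) * ((u (n - k) : ℂ) * s ^ (n - k))
        = ((u n : ℝ) - p n : ℝ) * s ^ n := by
      intro n
      have : ∀ k ∈ Finset.range (n + 1),
          ((p k : ℂ) * s ^ k) * ((u (n - k) : ℂ) * s ^ (n - k))
          = ((p k * u (n - k) : ℝ) : ℂ) * s ^ n := by
        intro k hk
        rw [Finset.mem_range] at hk
        have hkn : k + (n - k) = n := by omega
        have hpow : s ^ k * s ^ (n - k) = s ^ n := by rw [← pow_add, hkn]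
        push_cast
        rw [mul_mul_mul_comm, hpow]
      rw [Finset.sum_congr rfl this, ← Finset.sum_mul, ← Complex.ofReal_sum]
      rw [← hconv n]
    rw [h1]
    simp_rw [h2]
    have h3 : ∀ n : ℕ, (((u n : ℝ) - p n : ℝ) : ℂ) * s ^ n
        = (u n : ℂ) * s ^ n - (p n : ℂ) * s ^ n := by
      intro n; push_cast; ring
    simp_rw [h3]
    exact Summable.tsum_sub husC.of_norm hpsC.of_norm
  have hPne1 : P ≠ 1 := fun h => hne (by rw [h]; ring)
  refine ⟨hPne1, ?_⟩
  field_simp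
  linear_combination -hPU
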